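/- Let q ≥ 4 be a power of 2, let m ≥ 2 be an integer, n = (q^m − 1)/(q − 1), and let β be a primitive n-th root of unity in F_{q^m}. Then the minimal polynomial m_β(x) of β over F_q has degree m, and the cyclic code of length 2n over F_q with generator polynomial (x−1)^2 m_β(x) has dimension 2n − m − 2 and minimum distance d satisfying 3 ≤ d ≤ 4. -/
import Mathlib


open Polynomial IntermediateField

/-- The cyclic code of length `N` over the field `F` generated by the polynomial `g`.
Codewords are identified with the representatives of degree `< N` of the elements of the
ideal generated by `g` in `F[x]/(x^N - 1)`; equivalently, a polynomial `c` of degree `< N`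
is a codeword iff `c ∈ (g, x^N - 1)` as an ideal of `F[x]`. -/
noncomputable def cyclicCode (F : Type*) [Field F] (N : ℕ) (g : Polynomial F) :
    Submodule F (Polynomial F) :=
  Polynomial.degreeLT F N ⊓
    Submodule.restrictScalars F (Ideal.span ({g, Polynomial.X ^ N - 1} : Set (Polynomial F)))

/-- The minimum distance (equivalently, the minimum Hamming weight of a nonzero codeword,
a codeword being identified with its coefficient vector) of a linear code of polynomials. -/
noncomputable def minDist {F : Type*} [Field F] (C : Submodule F (Polynomial F)) : ℕ :=
  sInf {w | ∃ c ∈ C, c ≠ 0 ∧ c.support.card = w}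

lemma span_pair_of_dvd {F : Type*} [Field F] {g h : F[X]} (hdvd : g ∣ h) :
    Ideal.span ({g, h} : Set F[X]) = Ideal.span {g} := by
  apply le_antisymm
  · rw [Ideal.span_le]
    rintro x (rfl | rfl)
    · exact Ideal.subset_span rfl
    · exact Ideal.mem_span_singleton.2 hdvd
  · exact Ideal.span_mono (Set.singleton_subset_iff.2 (Or.inl rfl))

lemma cyclicCode_mem {F : Type*} [Field F] {N : ℕ} {g : F[X]} (hdvd : g ∣ X ^ N - 1) {c : F[X]} :
    c ∈ cyclicCode F N g ↔ c.degree < N ∧ g ∣ c := by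
  rw [cyclicCode, Submodule.mem_inf, mem_degreeLT, span_pair_of_dvd hdvd,
    Submodule.restrictScalars_mem, Ideal.mem_span_singleton]

lemma cyclicCode_eq_map {F : Type*} [Field F] {N : ℕ} {g : F[X]} (hg : g ≠ 0)
    (hdvd : g ∣ X ^ N - 1) (hN : 0 < N) :
    cyclicCode F N g =
      Submodule.map (LinearMap.mulLeft F g) (degreeLT F (N - g.natDegree)) := by
  have hXN : ((X:F[X]) ^ N - 1).natDegree = N := by
    rw [← C_1, natDegree_X_pow_sub_C]
  have hXN0 : ((X:F[X]) ^ N - 1) ≠ 0 := by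
    intro h; rw [h] at hXN; simp at hXN; omega
  have hgN : g.natDegree ≤ N := hXN ▸ natDegree_le_of_dvd hdvd hXN0
  ext c
  rw [cyclicCode_mem hdvd, Submodule.mem_map]
  constructor
  · rintro ⟨hdeg, p, rfl⟩
    refine ⟨p, mem_degreeLT.2 ?_, rfl⟩
    rcases eq_or_ne p 0 with rfl | hp
    · rw [degree_zero]; exact WithBot.bot_lt_coe _
    · have hc : g * p ≠ 0 := mul_ne_zero hg hp
      have h1 : (g * p).natDegree < N := (natDegree_lt_iff_degree_lt hc).2 hdeg
      rw [natDegree_mul hg hp] at h1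
      exact (natDegree_lt_iff_degree_lt hp).1 (by omega)
  · rintro ⟨p, hp, rfl⟩
    rw [mem_degreeLT] at hp
    simp only [LinearMap.mulLeft_apply]
    refine ⟨?_, Dvd.intro p rfl⟩
    rcases eq_or_ne p 0 with rfl | hp0
    · rw [mul_zero, degree_zero]; exact WithBot.bot_lt_coe _
    · have h1 : p.natDegree < N - g.natDegree := (natDegree_lt_iff_degree_lt hp0).2 hp
      have hc : g * p ≠ 0 := mul_ne_zero hg hp0
      rw [← natDegree_lt_iff_degree_lt hc, natDegree_mul hg hp0]
      omega

lemma finrank_cyclicCode {F : Type*} [Field F] {N : ℕ} {g : F[X]} (hg : g ≠ 0)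
    (hdvd : g ∣ X ^ N - 1) (hN : 0 < N) :
    Module.finrank F (cyclicCode F N g) = N - g.natDegree := by
  rw [cyclicCode_eq_map hg hdvd hN]
  have hinj : Function.Injective (LinearMap.mulLeft F g) := fun a b h => by
    simpa using mul_left_cancel₀ hg (by simpa using h)
  rw [← LinearEquiv.finrank_eq (Submodule.equivMapOfInjective _ hinj _)]
  rw [LinearEquiv.finrank_eq (degreeLTEquiv F _), Module.finrank_fin_fun]

/-- for `q ≥ 4` a power of `2`, `m ≥ 2`, `n = (q^m - 1)/(q - 1)` and `β` a
primitive `n`-th root of unity in `F_{q^m}`, the minimal polynomial `m_β(x)` over `F_q`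
has degree `m`, and the cyclic code of length `2n` over `F_q` with generator polynomial
`(x-1)^2 m_β(x)` has dimension `2n - m - 2` and minimum distance `d` with `3 ≤ d ≤ 4`. -/
theorem statement7 {F K : Type*} [Field F] [Fintype F] [Field K] [Fintype K] [Algebra F K]
    (q : ℕ) (hq : Fintype.card F = q) (hq2 : ∃ e : ℕ, q = 2 ^ e) (hq4 : 4 ≤ q)
    (m : ℕ) (hm : 2 ≤ m) (hK : Fintype.card K = q ^ m)
    (n : ℕ) (hn : n = (q ^ m - 1) / (q - 1))
    (β : K) (hβ : IsPrimitiveRoot β n) :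
    (minpoly F β).natDegree = m ∧
    Module.finrank F (cyclicCode F (2 * n) ((X - 1) ^ 2 * minpoly F β)) = 2 * n - m - 2 ∧
    3 ≤ minDist (cyclicCode F (2 * n) ((X - 1) ^ 2 * minpoly F β)) ∧
    minDist (cyclicCode F (2 * n) ((X - 1) ^ 2 * minpoly F β)) ≤ 4 := by
  obtain ⟨e, he⟩ := hq2
  have he1 : e ≠ 0 := by rintro rfl; simp at he; omega
  have hq1 : 2 ≤ q := by omega
  -- arithmetic facts
  have hdvdq : (q - 1) ∣ q ^ m - 1 := by simpa using Nat.sub_dvd_pow_sub_pow q 1 m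
  have hnm : n * (q - 1) = q ^ m - 1 := by rw [hn]; exact Nat.div_mul_cancel hdvdq
  have hqm : q ^ (m - 1) * q = q ^ m := by rw [← pow_succ]; congr 1; omega
  have hq_le : q ≤ q ^ (m - 1) := by
    calc q = q ^ 1 := (pow_one q).symm
    _ ≤ q ^ (m - 1) := Nat.pow_le_pow_right (by omega) (by omega)
  have hlt : q ^ (m - 1) < n := by
    by_contra hcon
    push_neg at hcon
    have h1 : n * (q - 1) ≤ q ^ (m - 1) * (q - 1) := Nat.mul_le_mul_right _ hcon
    rw [hnm] at h1
    have h2 : q ^ (m - 1) * (q - 1) + q ^ (m - 1) = q ^ m := by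
      have h3 : q ^ (m - 1) * (q - 1) + q ^ (m - 1) = q ^ (m - 1) * ((q - 1) + 1) := by ring
      have hq' : q - 1 + 1 = q := by omega
      rw [h3, hq', hqm]
    obtain ⟨Pr, hPr⟩ : ∃ Pr, q ^ (m - 1) * (q - 1) = Pr := ⟨_, rfl⟩
    obtain ⟨A, hA⟩ : ∃ A, q ^ (m - 1) = A := ⟨_, rfl⟩
    obtain ⟨B, hB⟩ : ∃ B, q ^ m = B := ⟨_, rfl⟩
    rw [hPr, hA, hB] at *
    omega
  have hn5 : 4 < n := by
    have := hq_le.trans hlt.le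
    omega
  -- n is odd
  have h2q : 2 ∣ q := by rw [he]; exact dvd_pow_self 2 he1
  have h2qm : 2 ∣ q ^ m := dvd_pow h2q (by omega)
  have hnodd : n % 2 = 1 := by
    rcases Nat.even_or_odd n with hpar | hpar
    · exfalso
      obtain ⟨t, ht⟩ := hpar
      have hdd : 2 ∣ q ^ m - 1 := by
        rw [← hnm, ht]
        exact ⟨t * (q - 1), by ring⟩
      have h16 : 4 ≤ q ^ m := le_trans hq4 (Nat.le_self_pow (by omega) q)
      obtain ⟨B, hB⟩ : ∃ B, q ^ m = B := ⟨_, rfl⟩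
      rw [hB] at hdd h2qm h16
      obtain ⟨u, hu⟩ := hdd
      obtain ⟨v, hv⟩ := h2qm
      omega
    · obtain ⟨t, ht⟩ := hpar
      omega
  -- basic facts about β
  have hβn : β ^ n = 1 := hβ.pow_eq_one
  have hβ0 : β ≠ 0 := by
    intro h
    rw [h, zero_pow (by omega : n ≠ 0)] at hβn
    exact zero_ne_one hβn
  have hint : IsIntegral F β := (Algebra.IsIntegral.of_finite F K).isIntegral β
  -- the degree of the minimal polynomial is m
  have hdeg : (minpoly F β).natDegree = m := by
    have hfd : Module.finrank F K = m := by
      have hcardK := Module.card_eq_pow_finrank (K := F) (V := K)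
      rw [hq, hK] at hcardK
      exact (Nat.pow_right_injective hq1 hcardK).symm
    set d := (minpoly F β).natDegree with hd
    have hd1 : 0 < d := minpoly.natDegree_pos hint
    have hE : Module.finrank F F⟮β⟯ = d := IntermediateField.adjoin.finrank hint
    have hdm : d ∣ m := by
      refine ⟨Module.finrank F⟮β⟯ K, ?_⟩
      rw [← hfd, ← Module.finrank_mul_finrank F F⟮β⟯ K, hE]
    have hdlem : d ≤ m := Nat.le_of_dvd (by omega) hdm
    haveI : Fintype F⟮β⟯ := Fintype.ofFinite _
    have hcardE : Fintype.card F⟮β⟯ = q ^ d := by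
      have := Module.card_eq_pow_finrank (K := F) (V := F⟮β⟯)
      rw [hq, hE] at this
      exact this
    set γ := IntermediateField.AdjoinSimple.gen F β with hγ
    have hγ0 : γ ≠ 0 := by
      intro h
      apply hβ0
      rw [← IntermediateField.AdjoinSimple.algebraMap_gen F β, ← hγ, h, map_zero]
    have hγpow : γ ^ (q ^ d - 1) = 1 := by
      rw [← hcardE]; exact FiniteField.pow_card_sub_one_eq_one γ hγ0
    have hβpow : β ^ (q ^ d - 1) = 1 := by
      have h := congrArg (algebraMap F⟮β⟯ K) hγpow
      rw [map_pow, map_one, IntermediateField.AdjoinSimple.algebraMap_gen] at h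
      exact h
    have hdvd2 : n ∣ q ^ d - 1 := (hβ.pow_eq_one_iff_dvd _).1 hβpow
    have hmd : m ≤ d := by
      by_contra hcon
      push_neg at hcon
      have h1 : q ^ d ≤ q ^ (m - 1) := Nat.pow_le_pow_right (by omega) (by omega)
      have hqd : q ≤ q ^ d := Nat.le_self_pow (by omega) q
      have h2 : n ≤ q ^ d - 1 := Nat.le_of_dvd (by omega) hdvd2
      obtain ⟨A, hA⟩ : ∃ A, q ^ d = A := ⟨_, rfl⟩
      obtain ⟨B, hB⟩ : ∃ B, q ^ (m - 1) = B := ⟨_, rfl⟩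
      rw [hA, hB] at *
      omega
    omega
  -- the generator polynomial
  set P := minpoly F β with hPdef
  have haevP : (aeval β) P = 0 := minpoly.aeval F β
  -- characteristic 2 facts
  have h2F : (2 : F) = 0 := by
    have hcast : ((q : ℕ) : F) = 0 := by rw [← hq]; exact Nat.cast_card_eq_zero F
    rw [he] at hcast
    push_cast at hcast
    exact (pow_eq_zero_iff he1).1 hcast
  have h2X : (2 : F[X]) = 0 := by
    rw [← map_ofNat (C : F →+* F[X]) 2, h2F, map_zero]
  have hnF : ((n : ℕ) : F) = 1 := by
    obtain ⟨t, ht⟩ : ∃ t, n = 2 * t + 1 := ⟨n / 2, by omega⟩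
    rw [ht]; push_cast; rw [h2F]; ring
  -- divisibility facts
  have hPmonic : P.Monic := minpoly.monic hint
  have hP0 : P ≠ 0 := hPmonic.ne_zero
  have hPdvd : P ∣ (X : F[X]) ^ n - 1 := by
    apply minpoly.dvd
    rw [map_sub, map_pow, aeval_X, map_one, hβn, sub_self]
  have hP1 : ¬ ((X - C 1 : F[X]) ∣ P) := by
    intro hdvd
    obtain ⟨u, hu⟩ := hdvd
    rcases (minpoly.irreducible hint).isUnit_or_isUnit hu with h | h
    · exact not_isUnit_X_sub_C 1 h
    · have h1 : P.natDegree = 1 := by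
        rw [hu, natDegree_mul (X_sub_C_ne_zero 1) (fun h0 => by simp [h0] at hu; exact hP0 hu),
          natDegree_X_sub_C, natDegree_eq_zero_of_isUnit h]
      omega
  have hcop1 : IsCoprime (X - C 1 : F[X]) P :=
    (irreducible_X_sub_C (1:F)).coprime_iff_not_dvd.2 hP1
  have hcop : IsCoprime ((X - C 1 : F[X]) ^ 2) P := hcop1.pow_left
  have hXn1 : (X - C 1 : F[X]) ∣ X ^ n - 1 := dvd_iff_isRoot.2 (by simp)
  have hsq : ((X : F[X]) ^ n - 1) ^ 2 = X ^ (2 * n) - 1 := by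
    rw [two_mul, pow_add]
    set Y := (X : F[X]) ^ n with hY
    linear_combination (1 - Y) * h2X
  have hgdvd : (X - 1 : F[X]) ^ 2 * P ∣ X ^ (2 * n) - 1 := by
    rw [← hsq]
    have h1 : (X - C 1 : F[X]) ^ 2 ∣ ((X : F[X]) ^ n - 1) ^ 2 := pow_dvd_pow_of_dvd hXn1 2
    have h2 : P ∣ ((X : F[X]) ^ n - 1) ^ 2 := hPdvd.trans (dvd_pow_self _ two_ne_zero)
    have := hcop.mul_dvd h1 h2
    simpa [C_1] using this
  have hg0 : ((X - 1 : F[X]) ^ 2 * P) ≠ 0 := by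
    have := mul_ne_zero (pow_ne_zero 2 (X_sub_C_ne_zero (1:F))) hP0
    simpa [C_1] using this
  have hgdeg : ((X - 1 : F[X]) ^ 2 * P).natDegree = 2 + m := by
    have hX1 : ((X - 1 : F[X]) ^ 2) ≠ 0 := by
      have := pow_ne_zero 2 (X_sub_C_ne_zero (1:F))
      simpa [C_1] using this
    rw [natDegree_mul hX1 hP0, natDegree_pow,
      show (X - 1 : F[X]) = X - C 1 from by rw [C_1], natDegree_X_sub_C, hdeg]
  refine ⟨hdeg, ?_, ?_, ?_⟩
  · -- dimension
    rw [finrank_cyclicCode hg0 hgdvd (by omega), hgdeg]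
    omega
  all_goals {
  -- the weight-4 codeword
  have hXn0 : ((X : F[X]) ^ n - 1) ≠ 0 := by
    intro h
    have h2 : ((X:F[X]) ^ n - 1).natDegree = n := by rw [← C_1, natDegree_X_pow_sub_C]
    rw [h] at h2; simp at h2; omega
  set c₀ : F[X] := (X - C 1) * (X ^ n - 1) with hc₀
  have hc₀ne : c₀ ≠ 0 := mul_ne_zero (X_sub_C_ne_zero 1) hXn0
  have hc₀deg : c₀.natDegree = 1 + n := by
    rw [hc₀, natDegree_mul (X_sub_C_ne_zero 1) hXn0, natDegree_X_sub_C, ← C_1,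
      natDegree_X_pow_sub_C]
  have hgc₀ : (X - 1 : F[X]) ^ 2 * P ∣ c₀ := by
    obtain ⟨t, ht⟩ := hcop1.mul_dvd hXn1 hPdvd
    refine ⟨t, ?_⟩
    rw [hc₀, ht, C_1]
    ring
  have hc₀mem : c₀ ∈ cyclicCode F (2 * n) ((X - 1) ^ 2 * P) := by
    rw [cyclicCode_mem hgdvd]
    refine ⟨?_, hgc₀⟩
    rw [← natDegree_lt_iff_degree_lt hc₀ne, hc₀deg]
    omega
  have hc₀eq : c₀ = X ^ (n + 1) - X ^ n - X + 1 := by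
    rw [hc₀, C_1]; ring
  have hsupp : c₀.support ⊆ {0, 1, n, n + 1} := by
    intro k hk
    rw [mem_support_iff] at hk
    by_contra hkmem
    apply hk
    simp only [Finset.mem_insert, Finset.mem_singleton] at hkmem
    push_neg at hkmem
    obtain ⟨h0, h1, hn', hn1⟩ := hkmem
    rw [hc₀eq]
    simp [coeff_X_pow, coeff_one, coeff_X, h0, h1, hn', hn1, Ne.symm h0, Ne.symm h1,
      Ne.symm hn', Ne.symm hn1]
  have h4 : ({0, 1, n, n + 1} : Finset ℕ).card ≤ 4 := by
    have t1 := Finset.card_insert_le 0 ({1, n, n + 1} : Finset ℕ)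
    have t2 := Finset.card_insert_le 1 ({n, n + 1} : Finset ℕ)
    have t3 := Finset.card_insert_le n ({n + 1} : Finset ℕ)
    rw [Finset.card_singleton] at t3
    omega
  first
  | -- lower bound
    (unfold minDist
     apply le_csInf
     · exact ⟨c₀.support.card, c₀, hc₀mem, hc₀ne, rfl⟩
     rintro w ⟨c, hcC, hc0', rfl⟩
     rw [cyclicCode_mem hgdvd] at hcC
     obtain ⟨hcdeg, hgc⟩ := hcC
     by_contra hcon
     push_neg at hcon
     have hX1c : (X - C 1 : F[X]) ∣ c := by
       refine dvd_trans (dvd_trans (dvd_pow_self _ two_ne_zero) ?_) hgc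
       rw [C_1]
       exact dvd_mul_right _ _
     have heval1 : eval 1 c = 0 := dvd_iff_isRoot.1 hX1c
     have hPc : P ∣ c := (dvd_mul_left P _).trans hgc
     have haev : aeval β c = 0 := by
       obtain ⟨u, hu⟩ := hPc
       rw [hu, map_mul, haevP, zero_mul]
     have hsqc : (X - C 1 : F[X]) ^ 2 ∣ c := by
       rw [C_1]; exact (dvd_mul_right _ _).trans hgc
     have hder : eval 1 (derivative c) = 0 := by
       obtain ⟨t, ht⟩ := hsqc
       rw [ht]
       simp [derivative_mul, derivative_pow]
     have hcard0 : c.support.card ≠ 0 := by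
       simp only [ne_eq, Finset.card_eq_zero, support_eq_empty]
       exact hc0'
     have hcase : c.support.card = 1 ∨ c.support.card = 2 := by omega
     rcases hcase with h1 | h2
     · obtain ⟨k, x, hx, hceq⟩ := card_support_eq_one.1 h1
       rw [hceq] at heval1
       simp at heval1
       exact hx heval1
     · obtain ⟨k, j, hkj, x, y, hx, hy, hceq⟩ := card_support_eq_two.1 h2
       rw [hceq] at heval1
       simp only [eval_add, eval_mul, eval_pow, eval_C, eval_X, one_pow, mul_one] at heval1
       have hyx : y = -x := eq_neg_of_add_eq_zero_right heval1
       rw [hceq] at haev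
       simp only [map_add, map_mul, map_pow, aeval_C, aeval_X] at haev
       have hxK : algebraMap F K x ≠ 0 := fun h =>
         hx ((algebraMap F K).injective (by rw [h, map_zero]))
       have hβkj : β ^ k = β ^ j := by
         have h0 : algebraMap F K x * (β ^ k - β ^ j) = 0 := by
           rw [hyx, map_neg] at haev
           linear_combination haev
         rcases mul_eq_zero.1 h0 with h | h
         · exact absurd h hxK
         · exact sub_eq_zero.1 h
       have hdvdn : n ∣ j - k := by
         apply (hβ.pow_eq_one_iff_dvd _).1
         have h1 : β ^ (k + (j - k)) = β ^ j := by congr 1; omega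
         rw [pow_add, hβkj] at h1
         exact mul_left_cancel₀ (pow_ne_zero j hβ0) (by rw [mul_one]; exact h1)
       have hj2n : j < 2 * n := by
         have hcoefj : c.coeff j = y := by
           rw [hceq]
           simp [coeff_X_pow, hkj.ne, hkj.ne']
         have hjle : j ≤ c.natDegree := le_natDegree_of_ne_zero (by rw [hcoefj]; exact hy)
         have := (natDegree_lt_iff_degree_lt hc0').2 hcdeg
         omega
       have hjkn : j = k + n := by
         obtain ⟨t, ht⟩ := hdvdn
         have hlt2 : n * t < n * 2 := by
           rw [← ht]
           omega
         have ht2 : t < 2 := Nat.lt_of_mul_lt_mul_left hlt2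
         have ht0 : t ≠ 0 := by rintro rfl; rw [mul_zero] at ht; omega
         have ht1 : t = 1 := by omega
         rw [ht1, mul_one] at ht
         omega
       rw [hceq] at hder
       simp only [derivative_add, derivative_C_mul_X_pow, eval_add, eval_mul, eval_pow,
         eval_C, eval_X, one_pow, mul_one] at hder
       rw [hyx, hjkn] at hder
       push_cast at hder
       rw [hnF] at hder
       have hx0 : x = 0 := by linear_combination -hder
       exact hx hx0)
  | -- upper bound
    (have hmem : c₀.support.card ∈ {w | ∃ c ∈ cyclicCode F (2 * n) ((X - 1) ^ 2 * P),
         c ≠ 0 ∧ c.support.card = w} := ⟨c₀, hc₀mem, hc₀ne, rfl⟩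
     unfold minDist
     exact le_trans (Nat.sInf_le hmem) (le_trans (Finset.card_le_card hsupp) h4))
  }
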